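/- Let ℓ ≥ 1, X the ℓ×ℓ matrix with X_{i,j} = 2cos(2π(2i−1)(2j−1)/(8ℓ)), and Ω the ℓ×ℓ matrix with Ω_{i,j} = 2cos(2π(i−1)(2j−1)/(4ℓ)). Then det X = (1/√2)·det Ω, where √2 denotes the positive square root of 2. -/

import Mathlib

open Real Finset Matrix Polynomial

lemma prodA (n : ℕ) (hn : 0 < n) :
    ∏ j ∈ Finset.range n, ((1:ℂ) - Complex.exp ((2*(j:ℂ)+1) * (π:ℂ) * Complex.I / n)) = 2 := by
  have hnc : (n:ℂ) ≠ 0 := Nat.cast_ne_zero.mpr hn.ne'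
  set ζ : ℂ := Complex.exp (2*π*Complex.I/n) with hζdef
  set α : ℂ := Complex.exp (π*Complex.I/n) with hαdef
  have hζ : IsPrimitiveRoot ζ n := Complex.isPrimitiveRoot_exp n hn.ne'
  have hα : α ^ n = -1 := by
    rw [hαdef, ← Complex.exp_nat_mul]
    rw [show (n:ℂ) * ((π:ℂ)*Complex.I/n) = π*Complex.I by field_simp]
    exact Complex.exp_pi_mul_I
  have hprod : ∀ j : ℕ, ζ ^ j * α = Complex.exp ((2*(j:ℂ)+1) * π * Complex.I / n) := by
    intro j
    rw [hζdef, hαdef, ← Complex.exp_nat_mul, ← Complex.exp_add]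
    congr 1
    field_simp
  have hroots : nthRoots n (-1 : ℂ) = (Multiset.range n).map (fun j => ζ ^ j * α) :=
    hζ.nthRoots_eq hα
  set p : Polynomial ℂ := Polynomial.X ^ n - Polynomial.C (-1) with hpdef
  have hmonic : p.Monic := monic_X_pow_sub_C _ hn.ne'
  have hsplit := (IsAlgClosed.splits p).eq_prod_roots_of_monic hmonic
  have heval : Polynomial.eval 1 p = 2 := by simp [hpdef]; norm_num
  rw [hsplit, Polynomial.eval_multiset_prod] at heval
  have hr : p.roots = nthRoots n (-1:ℂ) := rfl
  rw [hr, hroots, Multiset.map_map, Multiset.map_map] at heval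
  have hch : (Multiset.map ((Polynomial.eval 1 ∘ fun a => Polynomial.X - Polynomial.C a) ∘ fun j => ζ ^ j * α) (Multiset.range n)).prod
      = ∏ j ∈ Finset.range n, ((1:ℂ) - Complex.exp ((2*(j:ℂ)+1) * (π:ℂ) * Complex.I / n)) := by
    rw [Finset.prod_eq_multiset_prod, Finset.range_val]
    exact congrArg Multiset.prod (Multiset.map_congr rfl fun j _ => by simp [Function.comp, hprod j])
  rw [hch] at heval
  exact heval

lemma abs_one_sub_exp (z : ℝ) (hz : 0 ≤ Real.sin z) :
    ‖1 - Complex.exp (2 * (z:ℂ) * Complex.I)‖ = 2 * Real.sin z := by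
  have h1 : Complex.exp ((z:ℂ)*Complex.I) * Complex.exp ((-(z:ℂ)*Complex.I)) = 1 := by
    rw [← Complex.exp_add]; simp
  have h2 : Complex.exp ((z:ℂ)*Complex.I) * Complex.exp ((z:ℂ)*Complex.I)
      = Complex.exp (2*(z:ℂ)*Complex.I) := by
    rw [← Complex.exp_add]; ring_nf
  have key : (1:ℂ) - Complex.exp (2*(z:ℂ)*Complex.I)
      = Complex.exp ((z:ℂ)*Complex.I) * (-2*Complex.I) * Complex.sin (z:ℂ) := by
    rw [Complex.sin]
    linear_combination -h1 + h2 +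
      (Complex.exp ((z:ℂ)*Complex.I) * Complex.exp ((-(z:ℂ)*Complex.I))
        - Complex.exp ((z:ℂ)*Complex.I) * Complex.exp ((z:ℂ)*Complex.I)) * Complex.I_mul_I
  rw [key]
  rw [norm_mul, norm_mul]
  rw [Complex.norm_exp_ofReal_mul_I]
  rw [← Complex.ofReal_sin, Complex.norm_real]
  simp [abs_of_nonneg hz]

lemma sinprod (n : ℕ) (hn : 0 < n) :
    ∏ j ∈ Finset.range n, (2 * Real.sin ((2*(j:ℝ)+1) * π / (2*n))) = 2 := by
  have hnr : (n:ℝ) ≠ 0 := Nat.cast_ne_zero.mpr hn.ne'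
  have hsin : ∀ j ∈ Finset.range n, 0 ≤ Real.sin ((2*(j:ℝ)+1) * π / (2*n)) := by
    intro j hj
    rw [Finset.mem_range] at hj
    apply Real.sin_nonneg_of_nonneg_of_le_pi
    · positivity
    · rw [div_le_iff₀ (by positivity)]
      have : (2*(j:ℝ)+1) ≤ 2*n := by
        have : (j:ℝ) + 1 ≤ n := by exact_mod_cast hj
        linarith
      nlinarith [Real.pi_pos]
  have key : ∀ j : ℕ, (2*(j:ℂ)+1) * (π:ℂ) * Complex.I / n
      = 2 * (((2*(j:ℝ)+1) * π / (2*n) : ℝ) : ℂ) * Complex.I := by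
    intro j
    have hnc : (n:ℂ) ≠ 0 := Nat.cast_ne_zero.mpr hn.ne'
    push_cast
    field_simp
  calc ∏ j ∈ Finset.range n, (2 * Real.sin ((2*(j:ℝ)+1) * π / (2*n)))
      = ∏ j ∈ Finset.range n, ‖(1:ℂ) - Complex.exp ((2*(j:ℂ)+1) * (π:ℂ) * Complex.I / n)‖ := by
        refine Finset.prod_congr rfl fun j hj => ?_
        rw [key j, abs_one_sub_exp _ (hsin j hj)]
    _ = ‖∏ j ∈ Finset.range n, ((1:ℂ) - Complex.exp ((2*(j:ℂ)+1) * (π:ℂ) * Complex.I / n))‖ :=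
        (norm_prod _ _).symm
    _ = 2 := by rw [prodA n hn]; norm_num

lemma cosprod (l : ℕ) (hl : 0 < l) :
    ∏ j ∈ Finset.range l, (2 * Real.cos ((2*(j:ℝ)+1) * π / (4*l))) = Real.sqrt 2 := by
  have hlr : (l:ℝ) ≠ 0 := Nat.cast_ne_zero.mpr hl.ne'
  set P := ∏ j ∈ Finset.range l, (2 * Real.cos ((2*(j:ℝ)+1) * π / (4*l))) with hPdef
  have hPsin : P = ∏ j ∈ Finset.range l, (2 * Real.sin ((2*(j:ℝ)+1) * π / (4*l))) := by
    rw [hPdef, ← Finset.prod_range_reflect]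
    refine Finset.prod_congr rfl fun j hj => ?_
    rw [Finset.mem_range] at hj
    have hcast : ((l - 1 - j : ℕ) : ℝ) = (l:ℝ) - 1 - j := by
      have : l - 1 - j = l - (1 + j) := by omega
      rw [this, Nat.cast_sub (by omega)]
      push_cast; ring
    rw [hcast]
    rw [show (2*((l:ℝ)-1-j)+1) * π / (4*l) = π/2 - (2*(j:ℝ)+1) * π / (4*l) by
      field_simp; ring]
    rw [Real.cos_pi_div_two_sub]
  have hP2 : P * P = 2 := by
    nth_rewrite 2 [hPsin]
    rw [hPdef, ← Finset.prod_mul_distrib]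
    have hstep : ∏ j ∈ Finset.range l,
        (2 * Real.cos ((2*(j:ℝ)+1) * π / (4*l)) * (2 * Real.sin ((2*(j:ℝ)+1) * π / (4*l))))
        = ∏ j ∈ Finset.range l, (2 * Real.sin ((2*(j:ℝ)+1) * π / (2*l))) := by
      refine Finset.prod_congr rfl fun j hj => ?_
      rw [show (2*(j:ℝ)+1) * π / (2*l) = 2 * ((2*(j:ℝ)+1) * π / (4*l)) by field_simp; ring]
      rw [Real.sin_two_mul]
      ring
    rw [hstep, sinprod l hl]
  have hPpos : 0 ≤ P := by
    rw [hPdef]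
    apply Finset.prod_nonneg
    intro j hj
    rw [Finset.mem_range] at hj
    have hcos : 0 ≤ Real.cos ((2*(j:ℝ)+1) * π / (4*l)) := by
      apply Real.cos_nonneg_of_mem_Icc
      constructor
      · have : (0:ℝ) ≤ (2*(j:ℝ)+1) * π / (4*l) := by positivity
        linarith [Real.pi_pos]
      · rw [div_le_iff₀ (by positivity)]
        have : (2*(j:ℝ)+1) ≤ 2*l := by
          have : (j:ℝ) + 1 ≤ l := by exact_mod_cast hj
          linarith
        nlinarith [Real.pi_pos]
    linarith
  rw [show (2:ℝ) = P * P from hP2.symm, Real.sqrt_mul_self hPpos]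

lemma keytrig (a t : ℝ) : 2*Real.cos ((2*a+2)*t) * (2*Real.cos t)
    = 2*Real.cos ((2*a+1)*t) + 2*Real.cos ((2*a+3)*t) := by
  have h := Real.cos_add_cos ((2*a+1)*t) ((2*a+3)*t)
  have e1 : ((2*a+1)*t + (2*a+3)*t)/2 = (2*a+2)*t := by ring
  have e2 : ((2*a+1)*t - (2*a+3)*t)/2 = -t := by ring
  rw [e1, e2, Real.cos_neg] at h
  linarith

theorem stmt_9 (ℓ : ℕ) (hℓ : 1 ≤ ℓ)
    (X Ω : Matrix (Fin ℓ) (Fin ℓ) ℝ)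
    (hX : ∀ i j, X i j = 2 * Real.cos (2 * π * (2 * i.val + 1) * (2 * j.val + 1) / (8 * ℓ)))
    (hΩ : ∀ i j, Ω i j = 2 * Real.cos (2 * π * i.val * (2 * j.val + 1) / (4 * ℓ))) :
    X.det = (1 / Real.sqrt 2) * Ω.det := by
  haveI : NeZero ℓ := ⟨by omega⟩
  have hl0 : (ℓ:ℝ) ≠ 0 := Nat.cast_ne_zero.mpr (by omega)
  set θ : Fin ℓ → ℝ := fun j => (2*(j.val:ℝ)+1) * π / (4*ℓ) with hθdef
  set x : Fin ℓ → ℝ := fun j => 2 * Real.cos (θ j) with hxdef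
  have hXθ : ∀ i j, X i j = 2 * Real.cos ((2*(i.val:ℝ)+1) * θ j) := by
    intro i j
    rw [hX i j, hθdef]
    congr 1
    field_simp
    ring
  have hΩθ : ∀ i j, Ω i j = 2 * Real.cos (2*(i.val:ℝ) * θ j) := by
    intro i j
    rw [hΩ i j, hθdef]
    congr 1
    field_simp
  set L : Matrix (Fin ℓ) (Fin ℓ) ℝ := Matrix.of (fun i k : Fin ℓ =>
    if (i:ℕ) = (k:ℕ) then (if (i:ℕ) = 0 then (2:ℝ) else 1)
    else if (k:ℕ)+1 = (i:ℕ) then 1 else 0) with hLdef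
  have hmul : Ω * Matrix.diagonal x = L * X := by
    ext i j
    rw [Matrix.mul_diagonal, Matrix.mul_apply]
    rcases Nat.eq_zero_or_pos (i:ℕ) with hi | hi
    · have hsum : ∑ k, L i k * X k j = 2 * X i j := by
        rw [Finset.sum_eq_single i]
        · simp [hLdef, hi, (show i = 0 from Fin.ext (by simp [hi]))]
        · intro k _ hk
          have h1 : (i:ℕ) ≠ (k:ℕ) := fun h => hk (Fin.ext h.symm)
          have h2 : (k:ℕ)+1 ≠ (i:ℕ) := by omega
          simp [hLdef, h1, h2]
        · intro h; exact absurd (Finset.mem_univ i) h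
      rw [hsum, hΩθ i j, hXθ i j, hi, hxdef]
      push_cast
      norm_num
    · obtain ⟨m, hm⟩ : ∃ m, (i:ℕ) = m + 1 := ⟨(i:ℕ)-1, by omega⟩
      have hmlt : m < ℓ := by have := i.isLt; omega
      set i' : Fin ℓ := ⟨m, hmlt⟩ with hi'def
      have hii' : i' ≠ i := Fin.ne_of_val_ne (by simp [hi'def]; omega)
      have hsum : ∑ k, L i k * X k j = X i' j + X i j := by
        rw [Finset.sum_eq_add i' i hii' ?h0 ?ha ?hb]
        case h0 =>
          intro c _ hc
          have h1 : (i:ℕ) ≠ (c:ℕ) := fun h => hc.2 (Fin.ext h.symm)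
          have h2 : (c:ℕ)+1 ≠ (i:ℕ) := by
            intro h
            apply hc.1
            apply Fin.ext
            simp [hi'def]
            omega
          simp [hLdef, h1, h2]
        case ha => intro h; exact absurd (Finset.mem_univ i') h
        case hb => intro h; exact absurd (Finset.mem_univ i) h
        have hLi' : L i i' = 1 := by
          have h1 : (i:ℕ) ≠ (i':ℕ) := by simp [hi'def]; omega
          have h2 : (i':ℕ)+1 = (i:ℕ) := by simp [hi'def]; omega
          simp [hLdef, h1, h2]
        have hLi : L i i = 1 := by
          have h2 : (i:ℕ) ≠ 0 := by omega
          simp [hLdef, h2, (show i ≠ 0 from fun h => h2 (by simp [h]))]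
        rw [hLi', hLi]
        ring
      rw [hsum, hΩθ i j, hXθ i' j, hXθ i j, hxdef]
      have hval' : ((i':Fin ℓ):ℕ) = m := rfl
      rw [hval', hm]
      push_cast
      have := keytrig (m:ℝ) (θ j)
      rw [show 2*((m:ℝ)+1) = 2*(m:ℝ)+2 by ring]
      rw [show 2*(m:ℝ)+2+1 = 2*(m:ℝ)+3 by ring]
      linarith [this]
  have hdetL : L.det = 2 := by
    have htri : L.BlockTriangular OrderDual.toDual := by
      intro i j hij
      have hij' : (i:ℕ) < (j:ℕ) := hij
      have h1 : (i:ℕ) ≠ (j:ℕ) := by omega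
      have h2 : (j:ℕ)+1 ≠ (i:ℕ) := by omega
      simp [hLdef, h1, h2]
    rw [Matrix.det_of_lowerTriangular L htri]
    rw [Finset.prod_eq_single (0 : Fin ℓ)]
    · simp [hLdef]
    · intro i _ hi
      have h2 : (i:ℕ) ≠ 0 := fun h => hi (Fin.ext h)
      simp [hLdef, h2, (show i ≠ 0 from fun h => h2 (by simp [h]))]
    · intro h; exact absurd (Finset.mem_univ _) h
  have hprodx : ∏ j, x j = Real.sqrt 2 := by
    rw [hxdef, hθdef]
    rw [Fin.prod_univ_eq_prod_range (fun j : ℕ => 2 * Real.cos ((2*(j:ℝ)+1) * π / (4*ℓ))) ℓ]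
    exact cosprod ℓ (by omega)
  have hdet := congrArg Matrix.det hmul
  rw [Matrix.det_mul, Matrix.det_mul, Matrix.det_diagonal, hprodx, hdetL] at hdet
  have hs : (0:ℝ) < Real.sqrt 2 := Real.sqrt_pos.mpr (by norm_num)
  have hsq : Real.sqrt 2 * Real.sqrt 2 = 2 := Real.mul_self_sqrt (by norm_num)
  have h2 : X.det * Real.sqrt 2 = Ω.det := by
    apply mul_right_cancel₀ (ne_of_gt hs)
    calc X.det * Real.sqrt 2 * Real.sqrt 2 = X.det * 2 := by rw [mul_assoc, hsq]
      _ = Ω.det * Real.sqrt 2 := by linarith [hdet]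
  rw [← h2]
  field_simp
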